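/- In the Gaussian model {N(θ,1)}_{θ∈ℝ} with two-sided hypotheses Θ₁ = (-∞,θ₁) ∪ (θ₂,∞) and Θ₀ = [θ₁,θ₂], θ₁ < θ₂, the only experts (on the full Borel σ-algebra) are the trivial rules φ ≡ 0 and φ ≡ 1 (up to null sets). Indeed, any expert for (Θ₀, Θ₁) is simultaneously an expert for the one-sided problem ((-∞,θ₁), [θ₁,θ₂]) and for ([θ₁,θ₂], (θ₂,∞)), forcing it to be a.s. of the form 1_{(-∞,t)} and a.s. of the form 1_{(t',∞)}, which is only possible for the trivial rules. -/

import Mathlib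

open MeasureTheory Set ProbabilityTheory

lemma pdf_ratio' (θ₀ θ x : ℝ) :
    gaussianPDFReal θ 1 x
      = Real.exp ((θ - θ₀) * x - (θ ^ 2 - θ₀ ^ 2) / 2) * gaussianPDFReal θ₀ 1 x := by
  simp only [gaussianPDFReal, NNReal.coe_one, mul_one]
  rw [mul_left_comm, ← Real.exp_add]
  congr 1
  ring

lemma gauss_pos {S : Set ℝ} (θ : ℝ) (hvol : 0 < volume S) : 0 < gaussianReal θ 1 S := by
  rw [pos_iff_ne_zero]
  intro h0
  exact absurd ((gaussianReal_absolutelyContinuous' θ one_ne_zero) h0) (ne_of_gt hvol)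

lemma meas_le (θ₀ θ r : ℝ) (hr : 0 ≤ r) {S : Set ℝ} (hS : MeasurableSet S)
    (hpt : ∀ x ∈ S, gaussianPDFReal θ 1 x ≤ r * gaussianPDFReal θ₀ 1 x) :
    gaussianReal θ 1 S ≤ ENNReal.ofReal r * gaussianReal θ₀ 1 S := by
  rw [gaussianReal_apply _ one_ne_zero, gaussianReal_apply _ one_ne_zero,
    ← lintegral_const_mul _ (measurable_gaussianPDF θ₀ 1)]
  refine setLIntegral_mono ((measurable_gaussianPDF θ₀ 1).const_mul _) fun x hx => ?_
  rw [gaussianPDF_def, gaussianPDF_def, ← ENNReal.ofReal_mul hr]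
  exact ENNReal.ofReal_le_ofReal (hpt x hx)

lemma meas_ge (θ₀ θ r : ℝ) (hr : 0 ≤ r) {S : Set ℝ} (hS : MeasurableSet S)
    (hpt : ∀ x ∈ S, r * gaussianPDFReal θ₀ 1 x ≤ gaussianPDFReal θ 1 x) :
    ENNReal.ofReal r * gaussianReal θ₀ 1 S ≤ gaussianReal θ 1 S := by
  rw [gaussianReal_apply _ one_ne_zero, gaussianReal_apply _ one_ne_zero,
    ← lintegral_const_mul _ (measurable_gaussianPDF θ₀ 1)]
  refine setLIntegral_mono (measurable_gaussianPDF θ 1) fun x hx => ?_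
  rw [gaussianPDF_def, gaussianPDF_def, ← ENNReal.ofReal_mul hr]
  exact ENNReal.ofReal_le_ofReal (hpt x hx)

/-- The contradiction engine: if `A` lies left of `m₁ < m₂` and `B` right of `m₂`,
both with positive Lebesgue measure, and `θ₀ < θ`, then the "expert" product
inequality fails. -/
lemma engine (θ₀ θ m₁ m₂ : ℝ) (hθ : θ₀ < θ) (hm : m₁ < m₂) {A B : Set ℝ}
    (hA : MeasurableSet A) (hB : MeasurableSet B)
    (hAm : A ⊆ Iio m₁) (hBm : B ⊆ Ioi m₂)
    (hAp : 0 < volume A) (hBp : 0 < volume B) :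
    ¬ ((gaussianReal θ₀ 1 A).toReal * (gaussianReal θ 1 B).toReal
        ≤ (gaussianReal θ 1 A).toReal * (gaussianReal θ₀ 1 B).toReal) := by
  intro hle
  set c : ℝ := (θ ^ 2 - θ₀ ^ 2) / 2 with hc
  set r₁ : ℝ := Real.exp ((θ - θ₀) * m₁ - c) with hr₁
  set r₂ : ℝ := Real.exp ((θ - θ₀) * m₂ - c) with hr₂
  have hr12 : r₁ < r₂ := by
    apply Real.exp_lt_exp.mpr
    have : 0 < θ - θ₀ := by linarith
    nlinarith
  -- upper bound on A
  have hA' : gaussianReal θ 1 A ≤ ENNReal.ofReal r₁ * gaussianReal θ₀ 1 A := by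
    refine meas_le θ₀ θ r₁ (Real.exp_nonneg _) hA fun x hx => ?_
    rw [pdf_ratio' θ₀ θ x]
    apply mul_le_mul_of_nonneg_right _ (gaussianPDFReal_nonneg θ₀ 1 x)
    apply Real.exp_le_exp.mpr
    have hx' : x < m₁ := hAm hx
    have : 0 < θ - θ₀ := by linarith
    nlinarith
  -- lower bound on B
  have hB' : ENNReal.ofReal r₂ * gaussianReal θ₀ 1 B ≤ gaussianReal θ 1 B := by
    refine meas_ge θ₀ θ r₂ (Real.exp_nonneg _) hB fun x hx => ?_
    rw [pdf_ratio' θ₀ θ x]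
    apply mul_le_mul_of_nonneg_right _ (gaussianPDFReal_nonneg θ₀ 1 x)
    apply Real.exp_le_exp.mpr
    have hx' : m₂ < x := hBm hx
    have : 0 < θ - θ₀ := by linarith
    nlinarith
  have hfin : ∀ (ϑ : ℝ) (S : Set ℝ), gaussianReal ϑ 1 S ≠ ⊤ := fun ϑ S => measure_ne_top _ _
  set a0 := (gaussianReal θ₀ 1 A).toReal with ha0
  set b0 := (gaussianReal θ₀ 1 B).toReal with hb0
  set a := (gaussianReal θ 1 A).toReal with ha
  set b := (gaussianReal θ 1 B).toReal with hb
  have ha0p : 0 < a0 := ENNReal.toReal_pos (ne_of_gt (gauss_pos θ₀ hAp)) (hfin _ _)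
  have hb0p : 0 < b0 := ENNReal.toReal_pos (ne_of_gt (gauss_pos θ₀ hBp)) (hfin _ _)
  have haR : a ≤ r₁ * a0 := by
    have := ENNReal.toReal_le_toReal (hfin θ A)
      (ENNReal.mul_ne_top ENNReal.ofReal_ne_top (hfin θ₀ A)) |>.mpr hA'
    rwa [ENNReal.toReal_mul, ENNReal.toReal_ofReal (Real.exp_nonneg _)] at this
  have hbR : r₂ * b0 ≤ b := by
    have := ENNReal.toReal_le_toReal
      (ENNReal.mul_ne_top ENNReal.ofReal_ne_top (hfin θ₀ B)) (hfin θ B) |>.mpr hB'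
    rwa [ENNReal.toReal_mul, ENNReal.toReal_ofReal (Real.exp_nonneg _)] at this
  have h1 : a0 * (r₂ * b0) ≤ a0 * b := mul_le_mul_of_nonneg_left hbR ha0p.le
  have h2 : a * b0 ≤ (r₁ * a0) * b0 := mul_le_mul_of_nonneg_right haR hb0p.le
  have h3 : r₁ * (a0 * b0) < r₂ * (a0 * b0) :=
    mul_lt_mul_of_pos_right hr12 (mul_pos ha0p hb0p)
  nlinarith [h1, h2, h3, hle]

/-- From the expert inequality, extract the product inequality for `A ⊆ D`, `B ⊆ Dᶜ`. -/
lemma step (θ₁ θ₂ : ℝ) (h : θ₁ < θ₂) (D : Set ℝ) (hD : MeasurableSet D)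
    (hexp : ∀ θ₀ ∈ Icc θ₁ θ₂, ∀ θ ∈ Iio θ₁ ∪ Ioi θ₂,
      ∀ C : Set ℝ, MeasurableSet C → 0 < volume C →
        ((gaussianReal θ₀ 1) (C ∩ D)).toReal / ((gaussianReal θ₀ 1) C).toReal
          ≤ ((gaussianReal θ 1) (C ∩ D)).toReal / ((gaussianReal θ 1) C).toReal)
    (θ₀ : ℝ) (hθ₀ : θ₀ ∈ Icc θ₁ θ₂) (θ : ℝ) (hθ : θ ∈ Iio θ₁ ∪ Ioi θ₂)
    {A B : Set ℝ} (hA : MeasurableSet A) (hB : MeasurableSet B)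
    (hAD : A ⊆ D) (hBD : B ⊆ Dᶜ) (hAp : 0 < volume A) (hBp : 0 < volume B) :
    (gaussianReal θ₀ 1 A).toReal * (gaussianReal θ 1 B).toReal
      ≤ (gaussianReal θ 1 A).toReal * (gaussianReal θ₀ 1 B).toReal := by
  have hCvol : 0 < volume (A ∪ B) := lt_of_lt_of_le hAp (measure_mono subset_union_left)
  have hdisj : Disjoint A B := (disjoint_compl_right : Disjoint D Dᶜ).mono hAD hBD
  have hBDe : B ∩ D = ∅ := by
    ext x
    simp only [mem_inter_iff, mem_empty_iff_false, iff_false, not_and]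
    intro hxB hxD
    exact hBD hxB hxD
  have hCD : (A ∪ B) ∩ D = A := by
    rw [union_inter_distrib_right, inter_eq_left.mpr hAD, hBDe, union_empty]
  have key := hexp θ₀ hθ₀ θ hθ (A ∪ B) (hA.union hB) hCvol
  rw [hCD] at key
  have hsum : ∀ ϑ : ℝ, (gaussianReal ϑ 1 (A ∪ B)).toReal
      = (gaussianReal ϑ 1 A).toReal + (gaussianReal ϑ 1 B).toReal := by
    intro ϑ
    rw [measure_union hdisj hB, ENNReal.toReal_add (measure_ne_top _ _) (measure_ne_top _ _)]
  rw [hsum θ₀, hsum θ] at key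
  have hfin : ∀ (ϑ : ℝ) (S : Set ℝ), gaussianReal ϑ 1 S ≠ ⊤ := fun ϑ S => measure_ne_top _ _
  have ha0p : 0 < (gaussianReal θ₀ 1 A).toReal :=
    ENNReal.toReal_pos (ne_of_gt (gauss_pos θ₀ hAp)) (hfin _ _)
  have hb0p : 0 < (gaussianReal θ₀ 1 B).toReal :=
    ENNReal.toReal_pos (ne_of_gt (gauss_pos θ₀ hBp)) (hfin _ _)
  have hap : 0 < (gaussianReal θ 1 A).toReal :=
    ENNReal.toReal_pos (ne_of_gt (gauss_pos θ hAp)) (hfin _ _)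
  have hbp : 0 < (gaussianReal θ 1 B).toReal :=
    ENNReal.toReal_pos (ne_of_gt (gauss_pos θ hBp)) (hfin _ _)
  rw [div_le_div_iff₀ (by linarith) (by linarith)] at key
  nlinarith

/-- If a set has positive measure below `t`, it has positive measure below some `t' < t`. -/
lemma shave {E : Set ℝ} {t : ℝ} (hp : 0 < volume (E ∩ Iio t)) :
    ∃ t' < t, 0 < volume (E ∩ Iio t') := by
  by_contra hcon
  push_neg at hcon
  have hnull : ∀ n : ℕ, volume (E ∩ Iio (t - 1 / (n + 1))) = 0 := by
    intro n
    have h1 : t - 1 / ((n : ℝ) + 1) < t := by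
      have : 0 < 1 / ((n : ℝ) + 1) := by positivity
      linarith
    have := hcon _ h1
    exact le_antisymm this zero_le
  have hsub : E ∩ Iio t ⊆ ⋃ n : ℕ, E ∩ Iio (t - 1 / (n + 1)) := by
    rintro x ⟨hxE, hxt⟩
    obtain ⟨n, hn⟩ := exists_nat_one_div_lt (sub_pos.mpr (mem_Iio.mp hxt))
    exact mem_iUnion.mpr ⟨n, hxE, by simp only [mem_Iio]; linarith [hn]⟩
  have := measure_mono_null hsub (measure_iUnion_null hnull)
  exact absurd this (ne_of_gt hp)

/-- Separation: one of `E, Eᶜ` sits (with positive measure) to the left of the other. -/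
lemma sep_half {E : Set ℝ} {t : ℝ} (hEc : volume Eᶜ ≠ 0)
    (h0 : volume (Eᶜ ∩ Iio t) = 0) (hp : 0 < volume (E ∩ Iio t)) :
    ∃ m₁ m₂ : ℝ, m₁ < m₂ ∧ 0 < volume (E ∩ Iio m₁) ∧ 0 < volume (Eᶜ ∩ Ioi m₂) := by
  obtain ⟨t', ht't, hp'⟩ := shave hp
  refine ⟨t', (t' + t) / 2, by linarith, hp', ?_⟩
  have hsplit : volume Eᶜ ≤ volume (Eᶜ ∩ Iio t) + volume (Eᶜ ∩ Ici t) := by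
    refine le_trans (measure_mono ?_) (measure_union_le _ _)
    intro x hx
    rcases lt_or_ge x t with hx' | hx'
    · exact Or.inl ⟨hx, hx'⟩
    · exact Or.inr ⟨hx, hx'⟩
  rw [h0, zero_add] at hsplit
  have : 0 < volume (Eᶜ ∩ Ici t) := lt_of_lt_of_le (pos_iff_ne_zero.mpr hEc) hsplit
  refine lt_of_lt_of_le this (measure_mono (inter_subset_inter_right _ ?_))
  intro x hx
  simp only [mem_Ici] at hx
  simp only [mem_Ioi]
  linarith

theorem stmt10 (θ₁ θ₂ : ℝ) (h : θ₁ < θ₂) (D : Set ℝ) (hD : MeasurableSet D)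
    (hexp : ∀ θ₀ ∈ Icc θ₁ θ₂, ∀ θ ∈ Iio θ₁ ∪ Ioi θ₂,
      ∀ C : Set ℝ, MeasurableSet C → 0 < volume C →
        ((gaussianReal θ₀ 1) (C ∩ D)).toReal / ((gaussianReal θ₀ 1) C).toReal
          ≤ ((gaussianReal θ 1) (C ∩ D)).toReal / ((gaussianReal θ 1) C).toReal) :
    volume D = 0 ∨ volume Dᶜ = 0 := by
  by_contra hcon
  push_neg at hcon
  obtain ⟨hD0, hDc0⟩ := hcon
  have hθ₀ : θ₁ ∈ Icc θ₁ θ₂ := ⟨le_refl _, le_of_lt h⟩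
  have hθR : θ₂ + 1 ∈ Iio θ₁ ∪ Ioi θ₂ := Or.inr (by simp)
  have hθL : θ₁ - 1 ∈ Iio θ₁ ∪ Ioi θ₂ := Or.inl (by simp)
  -- dichotomy at every point
  have hdich : ∀ t : ℝ, 0 < volume (D ∩ Iio t) ∨ 0 < volume (Dᶜ ∩ Iio t) := by
    intro t
    by_contra hcc
    push_neg at hcc
    obtain ⟨h1, h2⟩ := hcc
    have h1' : volume (D ∩ Iio t) = 0 := le_antisymm h1 zero_le
    have h2' : volume (Dᶜ ∩ Iio t) = 0 := le_antisymm h2 zero_le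
    have : volume (Iio t) ≤ volume (D ∩ Iio t) + volume (Dᶜ ∩ Iio t) := by
      refine le_trans (measure_mono ?_) (measure_union_le _ _)
      intro x hx
      by_cases hxD : x ∈ D
      · exact Or.inl ⟨hxD, hx⟩
      · exact Or.inr ⟨hxD, hx⟩
    rw [h1', h2', add_zero] at this
    simp [Real.volume_Iio] at this
  -- the two "good" configurations lead to a contradiction
  have caseL : (∃ m₁ m₂ : ℝ, m₁ < m₂ ∧ 0 < volume (D ∩ Iio m₁)
      ∧ 0 < volume (Dᶜ ∩ Ioi m₂)) → False := by
    rintro ⟨m₁, m₂, hm, hA, hB⟩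
    exact engine θ₁ (θ₂ + 1) m₁ m₂ (by linarith) hm
      (hD.inter measurableSet_Iio) (hD.compl.inter measurableSet_Ioi)
      inter_subset_right inter_subset_right hA hB
      (step θ₁ θ₂ h D hD hexp θ₁ hθ₀ (θ₂ + 1) hθR
        (hD.inter measurableSet_Iio) (hD.compl.inter measurableSet_Ioi)
        inter_subset_left inter_subset_left hA hB)
  have caseR : (∃ m₁ m₂ : ℝ, m₁ < m₂ ∧ 0 < volume (Dᶜ ∩ Iio m₁)
      ∧ 0 < volume (D ∩ Ioi m₂)) → False := by
    rintro ⟨m₁, m₂, hm, hB, hA⟩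
    have hstep := step θ₁ θ₂ h D hD hexp θ₁ hθ₀ (θ₁ - 1) hθL
      (hD.inter measurableSet_Ioi) (hD.compl.inter measurableSet_Iio)
      inter_subset_left inter_subset_left hA hB
    exact engine (θ₁ - 1) θ₁ m₁ m₂ (by linarith) hm
      (hD.compl.inter measurableSet_Iio) (hD.inter measurableSet_Ioi)
      inter_subset_right inter_subset_right hB hA
      (by linarith [hstep])
  -- case analysis
  by_cases hS : ∃ t : ℝ, volume (Dᶜ ∩ Iio t) = 0
  · obtain ⟨t, ht⟩ := hS
    have hDt : 0 < volume (D ∩ Iio t) := by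
      rcases hdich t with h' | h'
      · exact h'
      · exact absurd ht (ne_of_gt h')
    exact caseL (sep_half hDc0 ht hDt)
  · by_cases hT : ∃ t : ℝ, volume (D ∩ Iio t) = 0
    · obtain ⟨t, ht⟩ := hT
      have hDt : 0 < volume (Dᶜ ∩ Iio t) := by
        rcases hdich t with h' | h'
        · exact absurd ht (ne_of_gt h')
        · exact h'
      have hsep := sep_half (E := Dᶜ) (by rwa [compl_compl]) (by rwa [compl_compl]) hDt
      simp only [compl_compl] at hsep
      exact caseR hsep
    · -- both D and Dᶜ have positive measure below every t
      push_neg at hS hT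
      have hR : 0 < volume (D ∩ Ioi 0) ∨ 0 < volume (Dᶜ ∩ Ioi 0) := by
        by_contra hcc
        push_neg at hcc
        obtain ⟨h1, h2⟩ := hcc
        have h1' : volume (D ∩ Ioi 0) = 0 := le_antisymm h1 zero_le
        have h2' : volume (Dᶜ ∩ Ioi 0) = 0 := le_antisymm h2 zero_le
        have : volume (Ioi (0:ℝ)) ≤ volume (D ∩ Ioi 0) + volume (Dᶜ ∩ Ioi 0) := by
          refine le_trans (measure_mono ?_) (measure_union_le _ _)
          intro x hx
          by_cases hxD : x ∈ D
          · exact Or.inl ⟨hxD, hx⟩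
          · exact Or.inr ⟨hxD, hx⟩
        rw [h1', h2', add_zero] at this
        simp [Real.volume_Ioi] at this
      rcases hR with h' | h'
      · exact caseR ⟨-1, 0, by norm_num, pos_iff_ne_zero.mpr (hS (-1)), h'⟩
      · exact caseL ⟨-1, 0, by norm_num, pos_iff_ne_zero.mpr (hT (-1)), h'⟩
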